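/- Let X₁, …, Xₙ ∈ [0,1] and define the empirical cdf F(x) = (1/n)·#{i : Xᵢ ≤ x}. Let a*_{jk} = (1/n) Σᵢ ψ_{jk}(Xᵢ) and f*_J(x) = 1 + Σ_{j=0}^{J} Σ_{k=0}^{2^j−1} a*_{jk} ψ_{jk}(x), with F*_J(x) = ∫₀ˣ f*_J(t) dt. Then for every k = 0, 1, …, 2^{J+1}, F*_J(k·2^{−(J+1)}) = F(k·2^{−(J+1)}). -/

import Mathlib

open MeasureTheory Finset

/-- The Haar wavelet function `ψ_{jk}(t) = 2^{j/2} ψ(2^j t - k)`. -/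
noncomputable def haar (j k : ℕ) (t : ℝ) : ℝ :=
  if (k : ℝ) / 2 ^ j ≤ t ∧ t < ((k : ℝ) + 1 / 2) / 2 ^ j then (2 : ℝ) ^ ((j : ℝ) / 2)
  else if ((k : ℝ) + 1 / 2) / 2 ^ j ≤ t ∧ t < ((k : ℝ) + 1) / 2 ^ j then
    -(2 : ℝ) ^ ((j : ℝ) / 2)
  else 0

/-- The empirical cdf of samples `X₁,…,Xₙ` (ties at dyadic points handled by the strict
inequality convention, samples in `[0,1)`). -/
noncomputable def empCdf (n : ℕ) (X : Fin n → ℝ) (x : ℝ) : ℝ :=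
  (1 / n) * ∑ i, (if X i < x then (1 : ℝ) else 0)

/-- Empirical wavelet coefficient `a*_{jk} = (1/n) Σᵢ ψ_{jk}(Xᵢ)`. -/
noncomputable def empCoef (n : ℕ) (X : Fin n → ℝ) (j k : ℕ) : ℝ :=
  (1 / n) * ∑ i, haar j k (X i)

/-- The `J`-th order wavelet expansion `f*_J` of the empirical distribution. -/
noncomputable def waveletPdf (n : ℕ) (X : Fin n → ℝ) (J : ℕ) (x : ℝ) : ℝ :=
  1 + ∑ j ∈ range (J + 1), ∑ k ∈ range (2 ^ j), empCoef n X j k * haar j k x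

lemma haar_eq_cases (j k : ℕ) (y : ℝ) (hy : 0 ≤ y) :
    haar j k y = if ⌊2 ^ (j+1) * y⌋₊ = 2*k then (2:ℝ) ^ ((j:ℝ)/2)
      else if ⌊2 ^ (j+1) * y⌋₊ = 2*k+1 then -(2:ℝ) ^ ((j:ℝ)/2) else 0 := by
  have hp : (0:ℝ) < 2 ^ j := by positivity
  have hz : (0:ℝ) ≤ 2 ^ (j+1) * y := by positivity
  have h1 : ((k:ℝ) / 2 ^ j ≤ y ∧ y < ((k:ℝ) + 1/2) / 2 ^ j) ↔ ⌊2 ^ (j+1) * y⌋₊ = 2*k := by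
    rw [Nat.floor_eq_iff hz, div_le_iff₀ hp, lt_div_iff₀ hp]
    push_cast
    constructor <;> rintro ⟨h₁, h₂⟩ <;> constructor <;> nlinarith [pow_succ (2:ℝ) j]
  have h2 : (((k:ℝ) + 1/2) / 2 ^ j ≤ y ∧ y < ((k:ℝ) + 1) / 2 ^ j) ↔ ⌊2 ^ (j+1) * y⌋₊ = 2*k+1 := by
    rw [Nat.floor_eq_iff hz, div_le_iff₀ hp, lt_div_iff₀ hp]
    push_cast
    constructor <;> rintro ⟨h₁, h₂⟩ <;> constructor <;> nlinarith [pow_succ (2:ℝ) j]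
  unfold haar
  rw [if_congr h1 rfl rfl, if_congr h2 rfl rfl]

lemma haar_mul (j k : ℕ) (y t : ℝ) (hy : y ∈ Set.Ico (0:ℝ) 1) (ht : t ∈ Set.Ico (0:ℝ) 1) :
    haar j k y * haar j k t =
      if k = ⌊2 ^ (j+1) * y⌋₊ / 2 ∧ ⌊2 ^ (j+1) * y⌋₊ / 2 = ⌊2 ^ (j+1) * t⌋₊ / 2 then
        (if ⌊2 ^ (j+1) * y⌋₊ % 2 = ⌊2 ^ (j+1) * t⌋₊ % 2 then (2:ℝ)^j else -(2:ℝ)^j)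
      else 0 := by
  have hsq : (2:ℝ) ^ ((j:ℝ)/2) * (2:ℝ) ^ ((j:ℝ)/2) = (2:ℝ)^j := by
    rw [← Real.rpow_natCast 2 j, ← Real.rpow_add (by norm_num)]
    norm_num
  rw [haar_eq_cases j k y hy.1, haar_eq_cases j k t ht.1]
  set m := ⌊2 ^ (j+1) * y⌋₊ with hm
  set m' := ⌊2 ^ (j+1) * t⌋₊ with hm'
  have e1 : (m = 2*k ∨ m = 2*k+1) ↔ k = m / 2 := by omega
  split_ifs <;>
    simp only [mul_neg, neg_mul, neg_neg, mul_zero, zero_mul, neg_zero, hsq, neg_eq_iff_eq_neg, neg_neg] <;>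
    omega

lemma level_sum (j : ℕ) (y t : ℝ) (hy : y ∈ Set.Ico (0:ℝ) 1) (ht : t ∈ Set.Ico (0:ℝ) 1) :
    ∑ k ∈ range (2 ^ j), haar j k y * haar j k t =
      if ⌊2 ^ (j+1) * y⌋₊ / 2 = ⌊2 ^ (j+1) * t⌋₊ / 2 then
        (if ⌊2 ^ (j+1) * y⌋₊ = ⌊2 ^ (j+1) * t⌋₊ then (2:ℝ)^(j+1) - (2:ℝ)^j else -(2:ℝ)^j) + 0
      else 0 := by
  set m := ⌊2 ^ (j+1) * y⌋₊ with hm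
  set m' := ⌊2 ^ (j+1) * t⌋₊ with hm'
  have hmlt : m < 2 ^ (j+1) := by
    rw [hm]
    have : (2:ℝ) ^ (j+1) * y < 2 ^ (j+1) := by
      have := hy.2; nlinarith [pow_pos (by norm_num : (0:ℝ) < 2) (j+1)]
    exact (Nat.floor_lt (mul_nonneg (by positivity) hy.1)).2 (by exact_mod_cast this)
  have hterm : ∀ k ∈ range (2 ^ j), haar j k y * haar j k t =
      if m / 2 = m' / 2 then
        (if k = m / 2 then (if m % 2 = m' % 2 then (2:ℝ)^j else -(2:ℝ)^j) else 0)
      else 0 := by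
    intro k _
    rw [haar_mul j k y t hy ht, ← hm, ← hm']
    split_ifs <;> tauto
  rw [Finset.sum_congr rfl hterm]
  by_cases h : m / 2 = m' / 2
  · simp only [h, if_true, Finset.sum_ite_eq', Finset.mem_range]
    rw [if_pos (by omega : m' / 2 < 2 ^ j)]
    by_cases hp : m % 2 = m' % 2
    · rw [if_pos hp, if_pos (by omega : m = m')]
      ring
    · rw [if_neg hp, if_neg (by omega : ¬ m = m')]
      ring
  · simp [h]

lemma kernel (J : ℕ) (y t : ℝ) (hy : y ∈ Set.Ico (0:ℝ) 1) (ht : t ∈ Set.Ico (0:ℝ) 1) :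
    1 + ∑ j ∈ range J, ∑ k ∈ range (2 ^ j), haar j k y * haar j k t =
      if ⌊2 ^ J * y⌋₊ = ⌊2 ^ J * t⌋₊ then (2:ℝ)^J else 0 := by
  induction J with
  | zero =>
      simp [Nat.floor_eq_zero.2 hy.2, Nat.floor_eq_zero.2 ht.2]
  | succ J ih =>
      rw [Finset.sum_range_succ, ← add_assoc, ih, level_sum J y t hy ht]
      have hdy : ⌊2 ^ J * y⌋₊ = ⌊2 ^ (J+1) * y⌋₊ / 2 := by
        rw [show (2:ℝ) ^ J * y = 2 ^ (J+1) * y / ((2:ℕ):ℝ) by push_cast; ring,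
          Nat.floor_div_natCast]
      have hdt : ⌊2 ^ J * t⌋₊ = ⌊2 ^ (J+1) * t⌋₊ / 2 := by
        rw [show (2:ℝ) ^ J * t = 2 ^ (J+1) * t / ((2:ℕ):ℝ) by push_cast; ring,
          Nat.floor_div_natCast]
      rw [hdy, hdt]
      set m := ⌊2 ^ (J+1) * y⌋₊
      set m' := ⌊2 ^ (J+1) * t⌋₊
      split_ifs with h1 h2 h3 <;> try ring
      exfalso; omega





lemma waveletPdf_eq (n : ℕ) (hn : 0 < n) (X : Fin n → ℝ) (hX : ∀ i, X i ∈ Set.Ico (0:ℝ) 1)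
    (J : ℕ) (t : ℝ) (ht : t ∈ Set.Ico (0:ℝ) 1) :
    waveletPdf n X J t =
      (1 / n) * ∑ i, (if ⌊2 ^ (J+1) * X i⌋₊ = ⌊2 ^ (J+1) * t⌋₊ then (2:ℝ)^(J+1) else 0) := by
  have hn' : (n:ℝ) ≠ 0 := Nat.cast_ne_zero.2 hn.ne'
  have key : ∀ i : Fin n,
      (if ⌊2 ^ (J+1) * X i⌋₊ = ⌊2 ^ (J+1) * t⌋₊ then (2:ℝ)^(J+1) else 0)
        = 1 + ∑ j ∈ range (J+1), ∑ k ∈ range (2 ^ j), haar j k (X i) * haar j k t :=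
    fun i => (kernel (J+1) (X i) t (hX i) ht).symm
  rw [Finset.sum_congr rfl (fun i _ => key i), Finset.sum_add_distrib, mul_add]
  rw [Finset.sum_const, Finset.card_univ, Fintype.card_fin, nsmul_eq_mul, mul_one,
    one_div, inv_mul_cancel₀ hn']
  unfold waveletPdf empCoef
  congr 1
  have inner : ∀ j k : ℕ, ((1/(n:ℝ)) * ∑ i, haar j k (X i)) * haar j k t
      = (1/(n:ℝ)) * ∑ i, haar j k (X i) * haar j k t := by
    intro j k
    rw [mul_assoc, Finset.sum_mul]
  calc ∑ j ∈ range (J+1), ∑ k ∈ range (2 ^ j), ((1/(n:ℝ)) * ∑ i, haar j k (X i)) * haar j k t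
      = ∑ j ∈ range (J+1), ∑ k ∈ range (2 ^ j), (1/(n:ℝ)) * ∑ i, haar j k (X i) * haar j k t := by
        exact Finset.sum_congr rfl fun j _ => Finset.sum_congr rfl fun k _ => inner j k
    _ = (1/(n:ℝ)) * ∑ j ∈ range (J+1), ∑ k ∈ range (2 ^ j), ∑ i, haar j k (X i) * haar j k t := by
        rw [Finset.mul_sum]
        exact Finset.sum_congr rfl fun j _ => (Finset.mul_sum _ _ _).symm
    _ = (1/(n:ℝ)) * ∑ i, ∑ j ∈ range (J+1), ∑ k ∈ range (2 ^ j), haar j k (X i) * haar j k t := by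
        congr 1
        rw [Finset.sum_comm]
        exact Finset.sum_congr rfl fun j _ => Finset.sum_comm
    _ = (n:ℝ)⁻¹ * ∑ i, ∑ j ∈ range (J+1), ∑ k ∈ range (2 ^ j), haar j k (X i) * haar j k t := by
        rw [one_div]

lemma integral_const_on (f : ℝ → ℝ) (v a b : ℝ) (hab : a ≤ b)
    (h : ∀ t ∈ Set.Ico a b, f t = v) :
    IntervalIntegrable f volume a b ∧ (∫ t in a..b, f t) = v * (b - a) := by
  have hae : ∀ᵐ x ∂(volume : Measure ℝ), x ∈ Set.Ioc a b → f x = v := by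
    rw [ae_iff]
    refine measure_mono_null (fun x hx => ?_) (measure_singleton b)
    simp only [Set.mem_setOf_eq, _root_.not_imp] at hx
    obtain ⟨hx1, hx2⟩ := hx
    by_contra hb
    exact hx2 (h x ⟨le_of_lt hx1.1, lt_of_le_of_ne hx1.2 (by simpa using hb)⟩)
  have haeR : f =ᵐ[volume.restrict (Set.Ioc a b)] fun _ => v :=
    (ae_restrict_iff' measurableSet_Ioc).2 hae
  constructor
  · rw [intervalIntegrable_iff_integrableOn_Ioc_of_le hab]
    exact (integrableOn_const measure_Ioc_lt_top.ne enorm_ne_top).congr_fun_ae haeR.symm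
  · have : (∫ t in a..b, f t) = ∫ _ in a..b, v := by
      apply intervalIntegral.integral_congr_ae
      rwa [Set.uIoc_of_le hab]
    rw [this, intervalIntegral.integral_const, smul_eq_mul, mul_comm]


/-- The cdf reconstructed from the wavelet expansion agrees with the empirical cdf at
every dyadic point `k · 2^{-(J+1)}`, `k = 0, 1, …, 2^{J+1}`. -/
theorem waveletCdf_eq_empCdf_at_dyadic (n : ℕ) (hn : 0 < n) (J : ℕ) (X : Fin n → ℝ)
    (hX : ∀ i, X i ∈ Set.Ico (0 : ℝ) 1) (k : ℕ) (hk : k ≤ 2 ^ (J + 1)) :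
    (∫ t in (0 : ℝ)..((k : ℝ) / 2 ^ (J + 1)), waveletPdf n X J t)
      = empCdf n X ((k : ℝ) / 2 ^ (J + 1)) := by
  have hP : (0:ℝ) < 2 ^ (J+1) := by positivity
  set a : ℕ → ℝ := fun c => (c:ℝ) / 2 ^ (J+1) with ha
  set v : ℕ → ℝ := fun c =>
    (1/(n:ℝ)) * ∑ i, (if ⌊2 ^ (J+1) * X i⌋₊ = c then (2:ℝ)^(J+1) else 0) with hv
  have cell : ∀ c, c < 2 ^ (J+1) → ∀ t ∈ Set.Ico (a c) (a (c+1)),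
      waveletPdf n X J t = v c := by
    intro c hc t htc
    have htc1 : (c:ℝ) / 2 ^ (J+1) ≤ t := htc.1
    have htc2 : t < ((c:ℝ)+1) / 2 ^ (J+1) := by
      have := htc.2; simpa [ha] using this
    have h0t : (0:ℝ) ≤ t := le_trans (by positivity) htc1
    have hcP : ((c:ℝ)+1) ≤ 2 ^ (J+1) := by exact_mod_cast Nat.succ_le_of_lt hc
    have ht1 : t < 1 := lt_of_lt_of_le htc2 (by rw [div_le_one hP]; exact hcP)
    have hfl : ⌊2 ^ (J+1) * t⌋₊ = c := by
      rw [Nat.floor_eq_iff (by positivity)]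
      constructor
      · nlinarith [(div_le_iff₀ hP).1 htc1]
      · nlinarith [(lt_div_iff₀ hP).1 htc2]
    rw [waveletPdf_eq n hn X hX J t ⟨h0t, ht1⟩, hfl]
  have hseg : ∀ c, c < k → IntervalIntegrable (waveletPdf n X J) volume (a c) (a (c+1)) ∧
      (∫ t in a c..a (c+1), waveletPdf n X J t) = v c * (a (c+1) - a c) := by
    intro c hc
    apply integral_const_on
    · exact (div_le_div_iff_of_pos_right hP).2 (by push_cast; linarith)
    · exact cell c (lt_of_lt_of_le hc hk)
  have hadj := intervalIntegral.sum_integral_adjacent_intervals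
    (a := a) (n := k) (fun c hc => (hseg c hc).1)
  have ha0 : a 0 = 0 := by simp [ha]
  have hak : a k = (k:ℝ) / 2 ^ (J+1) := rfl
  rw [ha0, hak] at hadj
  rw [← hadj, Finset.sum_congr rfl (fun c hc => (hseg c (Finset.mem_range.1 hc)).2)]
  have hda : ∀ c : ℕ, a (c+1) - a c = ((2:ℝ) ^ (J+1))⁻¹ := by
    intro c
    simp only [ha]
    push_cast
    field_simp
    ring
  have final : ∀ i, ∑ c ∈ range k, (if ⌊2 ^ (J+1) * X i⌋₊ = c then (2:ℝ)^(J+1) else 0)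
      = if X i < (k:ℝ) / 2 ^ (J+1) then (2:ℝ)^(J+1) else 0 := by
    intro i
    rw [Finset.sum_ite_eq (range k) (⌊2 ^ (J+1) * X i⌋₊) (fun _ => (2:ℝ)^(J+1))]
    apply if_congr _ rfl rfl
    rw [Finset.mem_range, Nat.floor_lt (mul_nonneg (by positivity) (hX i).1)]
    rw [mul_comm, ← lt_div_iff₀ hP]
  calc ∑ c ∈ range k, v c * (a (c+1) - a c)
      = (∑ c ∈ range k, v c) * ((2:ℝ) ^ (J+1))⁻¹ := by
        rw [Finset.sum_mul]
        exact Finset.sum_congr rfl fun c _ => by rw [hda c]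
    _ = ((1/(n:ℝ)) * ∑ i, ∑ c ∈ range k,
          (if ⌊2 ^ (J+1) * X i⌋₊ = c then (2:ℝ)^(J+1) else 0)) * ((2:ℝ) ^ (J+1))⁻¹ := by
        congr 1
        simp only [hv]
        rw [← Finset.mul_sum, Finset.sum_comm]
    _ = ((1/(n:ℝ)) * ∑ i, (if X i < (k:ℝ) / 2 ^ (J+1) then (2:ℝ)^(J+1) else 0))
          * ((2:ℝ) ^ (J+1))⁻¹ := by
        rw [Finset.sum_congr rfl fun i _ => final i]
    _ = (1/(n:ℝ)) * ∑ i, (if X i < (k:ℝ) / 2 ^ (J+1) then (1:ℝ) else 0) := by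
        rw [mul_assoc, Finset.sum_mul]
        congr 1
        refine Finset.sum_congr rfl fun i _ => ?_
        split_ifs
        · exact mul_inv_cancel₀ hP.ne'
        · simp
    _ = empCdf n X ((k:ℝ) / 2 ^ (J+1)) := rfl
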